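/- For any synchronizing automaton 𝒜 with n ≥ 2 states, any v-minimal word u, any i ∈ supp(u), and any g ∈ ℐ_i, there is a word z ∈ Σ* with |z| ≤ D(2, Rnk(ℐ_i), n) such that g·θ_i(z) ∼_i 0_i. -/

import Mathlib

open scoped BigOperators

set_option synthInstance.maxHeartbeats 1000000
set_option maxHeartbeats 1000000

noncomputable section

/-- Action of a word on a state: `q · u`. -/
def actW {Q A : Type*} (δ : Q → A → Q) (q : Q) (u : List A) : Q :=
  u.foldl δ q

/-- The image `Q · u` of the full state set under a word. -/
def imageSet {Q A : Type*} [Fintype Q] [DecidableEq Q] (δ : Q → A → Q) (u : List A) :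
    Finset Q :=
  Finset.image (fun q => actW δ q u) Finset.univ

/-- The rank `rk(u) = |Q · u|` of a word. -/
def wordRank {Q A : Type*} [Fintype Q] [DecidableEq Q] (δ : Q → A → Q) (u : List A) : ℕ :=
  (imageSet δ u).card

/-- A word is reset (synchronizing) if `|Q · u| = 1`. -/
def IsReset {Q A : Type*} [Fintype Q] [DecidableEq Q] (δ : Q → A → Q) (u : List A) : Prop :=
  wordRank δ u = 1

/-- The automaton is synchronizing if it admits a reset word. -/
def IsSynchronizing {Q A : Type*} [Fintype Q] [DecidableEq Q] (δ : Q → A → Q) : Prop :=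
  ∃ u : List A, IsReset δ u

/-- `Syn(𝒜)`, the set of reset words. -/
def SynWords {Q A : Type*} [Fintype Q] [DecidableEq Q] (δ : Q → A → Q) : Set (List A) :=
  {u | IsReset δ u}

/-- The hyperplane `w⊥ = {v ∈ ℂQ : ∑ q, v q = 0}`. -/
def Wperp (Q : Type*) [Fintype Q] : Submodule ℂ (Q → ℂ) :=
  LinearMap.ker (∑ q : Q, (LinearMap.proj q : (Q → ℂ) →ₗ[ℂ] ℂ))

theorem mem_Wperp {Q : Type*} [Fintype Q] (v : Q → ℂ) :
    v ∈ Wperp Q ↔ ∑ q : Q, v q = 0 := by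
  simp [Wperp, LinearMap.mem_ker, LinearMap.sum_apply]

/-- The (right) action of a word on row vectors `v ↦ v·π(u)`. -/
def piLin {Q A : Type*} [Fintype Q] [DecidableEq Q] (δ : Q → A → Q) (u : List A) :
    (Q → ℂ) →ₗ[ℂ] (Q → ℂ) where
  toFun v := fun p => ∑ q ∈ Finset.univ.filter (fun q => actW δ q u = p), v q
  map_add' := by
    intro a b; funext p; simp [Finset.sum_add_distrib]
  map_smul' := by
    intro c v; funext p; simp [Finset.mul_sum]

theorem piLin_mem {Q A : Type*} [Fintype Q] [DecidableEq Q] (δ : Q → A → Q) (u : List A) :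
    ∀ v ∈ Wperp Q, piLin δ u v ∈ Wperp Q := by
  intro v hv
  rw [mem_Wperp] at hv ⊢
  have h := Finset.sum_fiberwise (Finset.univ : Finset Q) (fun q => actW δ q u) v
  calc ∑ p : Q, piLin δ u v p
      = ∑ p : Q, ∑ q ∈ Finset.univ.filter (fun q => actW δ q u = p), v q := rfl
    _ = ∑ q : Q, v q := h
    _ = 0 := hv

/-- The endomorphism of `w⊥` induced by a word. -/
def rhoEnd {Q A : Type*} [Fintype Q] [DecidableEq Q] (δ : Q → A → Q) (u : List A) :
    Module.End ℂ (Wperp Q) :=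
  (piLin δ u).restrict (piLin_mem δ u)

/-- The representation `ρ : Σ* → End(w⊥)`; we record it in the multiplicative opposite so
that `ρ (u ++ v) = ρ u * ρ v` (the paper's right-action convention). -/
def rho {Q A : Type*} [Fintype Q] [DecidableEq Q] (δ : Q → A → Q) (u : List A) :
    (Module.End ℂ (Wperp Q))ᵐᵒᵖ :=
  MulOpposite.op (rhoEnd δ u)

/-- `ℛ`, the ℂ-subalgebra generated by `ρ(Σ*)`. -/
def Ralg {Q A : Type*} [Fintype Q] [DecidableEq Q] (δ : Q → A → Q) :
    Subalgebra ℂ (Module.End ℂ (Wperp Q))ᵐᵒᵖ :=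
  Algebra.adjoin ℂ (Set.range (rho δ))

/-- `ρ(u)` seen as an element of `ℛ`. -/
def rhoR {Q A : Type*} [Fintype Q] [DecidableEq Q] (δ : Q → A → Q) (u : List A) :
    Ralg δ :=
  ⟨rho δ u, Algebra.subset_adjoin (Set.mem_range_self u)⟩

/-- The Jacobson radical `Rad(ℛ)` of `ℛ`, realised as a subset of the ambient algebra via
the standard characterisation: `x ∈ Rad(ℛ)` iff `x ∈ ℛ` and for every `y ∈ ℛ` the element
`1 - y * x` is left-invertible in `ℛ`. -/
def RadSet {Q A : Type*} [Fintype Q] [DecidableEq Q] (δ : Q → A → Q) :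
    Set (Module.End ℂ (Wperp Q))ᵐᵒᵖ :=
  {x | x ∈ Ralg δ ∧ ∀ y ∈ Ralg δ, ∃ z ∈ Ralg δ, z * (1 - y * x) = 1}

/-- `Rad(𝒜)`: the set of radical words, i.e. words `u` with `ρ(u) ∈ Rad(ℛ)`. -/
def RadWords {Q A : Type*} [Fintype Q] [DecidableEq Q] (δ : Q → A → Q) : Set (List A) :=
  {u | rho δ u ∈ RadSet δ}

/-- The automaton is semisimple when `Rad(𝒜) = Syn(𝒜)`. -/
def IsSemisimple {Q A : Type*} [Fintype Q] [DecidableEq Q] (δ : Q → A → Q) : Prop :=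
  RadWords δ = SynWords δ

/-- The `t`-packing number `D(t,r,n)`: the maximum size of a family of `r`-subsets of an
`n`-set in which every `t`-subset is contained in at most one member. -/
def packingNumber (t r n : ℕ) : ℕ :=
  sSup {m | ∃ F : Finset (Finset (Fin n)), F.card = m ∧ (∀ S ∈ F, S.card = r) ∧
    ∀ T : Finset (Fin n), T.card = t → (F.filter fun S => T ⊆ S).card ≤ 1}

/-- The former-rank `Fr(𝒜)`: the least rank of a non-reset word. -/
def formerRank {Q A : Type*} [Fintype Q] [DecidableEq Q] (δ : Q → A → Q) : ℕ :=
  sInf {m | ∃ u : List A, ¬ IsReset δ u ∧ wordRank δ u = m}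

/-- `Fs(𝒜)`: the set of former-synchronizing words. -/
def Fs {Q A : Type*} [Fintype Q] [DecidableEq Q] (δ : Q → A → Q) : Set (List A) :=
  {u | wordRank δ u = formerRank δ}

/-- `θ_i(u)`: the image of `ρ(u)` in the `i`-th Wedderburn–Artin matrix component, where
`e : ℛ → ∏ i, M_{n_i}(ℂ)` is the quotient map `ψ` followed by the fixed isomorphism. -/
def theta {Q A : Type*} [Fintype Q] [DecidableEq Q] (δ : Q → A → Q) {k : ℕ} {nn : Fin k → ℕ}
    (e : Ralg δ →ₐ[ℂ] ∀ i : Fin k, Matrix (Fin (nn i)) (Fin (nn i)) ℂ)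
    (u : List A) (i : Fin k) : Matrix (Fin (nn i)) (Fin (nn i)) ℂ :=
  e (rhoR δ u) i

/-- `supp(v) = {i : θ_i(v) ≠ 0}`. -/
def suppW {Q A : Type*} [Fintype Q] [DecidableEq Q] (δ : Q → A → Q) {k : ℕ} {nn : Fin k → ℕ}
    (e : Ralg δ →ₐ[ℂ] ∀ i : Fin k, Matrix (Fin (nn i)) (Fin (nn i)) ℂ)
    (v : List A) : Set (Fin k) :=
  {i | theta δ e v i ≠ 0}

/-- `u ∈ Σ* v Σ*`, i.e. `v` is a factor of `u`. -/
def InFactor {A : Type*} (v u : List A) : Prop :=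
  ∃ a b : List A, u = a ++ v ++ b

/-- `u` is a `v`-minimal word: `u ∈ Σ*vΣ*`, `supp(u)` is nonempty, and `supp(u)` is minimal
among the nonempty supports of words in `Σ*vΣ*`. -/
def IsVMinimal {Q A : Type*} [Fintype Q] [DecidableEq Q] (δ : Q → A → Q) {k : ℕ}
    {nn : Fin k → ℕ}
    (e : Ralg δ →ₐ[ℂ] ∀ i : Fin k, Matrix (Fin (nn i)) (Fin (nn i)) ℂ)
    (v u : List A) : Prop :=
  InFactor v u ∧ (suppW δ e u).Nonempty ∧
    ∀ z : List A, InFactor v z → suppW δ e z ⊆ suppW δ e u →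
      suppW δ e z = ∅ ∨ suppW δ e z = suppW δ e u

/-- The `i`-th factor monoid `ℳ_i = θ_i(Σ*)`. -/
def factorMonoid {Q A : Type*} [Fintype Q] [DecidableEq Q] (δ : Q → A → Q) {k : ℕ}
    {nn : Fin k → ℕ}
    (e : Ralg δ →ₐ[ℂ] ∀ i : Fin k, Matrix (Fin (nn i)) (Fin (nn i)) ℂ)
    (i : Fin k) : Set (Matrix (Fin (nn i)) (Fin (nn i)) ℂ) :=
  Set.range fun u : List A => theta δ e u i

/-- A two-sided ideal of the (sub)monoid `M`. -/
def IsSetIdeal {X : Type*} [Mul X] (M I : Set X) : Prop :=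
  I ⊆ M ∧ ∀ a ∈ M, ∀ x ∈ I, a * x ∈ I ∧ x * a ∈ I

/-- `I` is a `0`-minimal (two-sided) ideal of the monoid `M`. -/
def IsZeroMinimalIdeal {X : Type*} [Mul X] [Zero X] (M I : Set X) : Prop :=
  IsSetIdeal M I ∧ (0 : X) ∈ I ∧ I ≠ {0} ∧
    ∀ J : Set X, IsSetIdeal M J → (0 : X) ∈ J → J ⊆ I → J ≠ {0} → J = I

/-- `Rnk_i(g) = min {rk(u) : θ_i(u) = g}`. -/
def rnkElt {Q A : Type*} [Fintype Q] [DecidableEq Q] (δ : Q → A → Q) {k : ℕ}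
    {nn : Fin k → ℕ}
    (e : Ralg δ →ₐ[ℂ] ∀ i : Fin k, Matrix (Fin (nn i)) (Fin (nn i)) ℂ)
    (i : Fin k) (g : Matrix (Fin (nn i)) (Fin (nn i)) ℂ) : ℕ :=
  sInf {m | ∃ u : List A, theta δ e u i = g ∧ wordRank δ u = m}

/-- `Rnk(ℐ_i) = min {Rnk_i(g) : g ∈ ℐ_i ∖ {0}}`. -/
def rnkIdeal {Q A : Type*} [Fintype Q] [DecidableEq Q] (δ : Q → A → Q) {k : ℕ}
    {nn : Fin k → ℕ}
    (e : Ralg δ →ₐ[ℂ] ∀ i : Fin k, Matrix (Fin (nn i)) (Fin (nn i)) ℂ)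
    (i : Fin k) (I : Set (Matrix (Fin (nn i)) (Fin (nn i)) ℂ)) : ℕ :=
  sInf {m | ∃ g ∈ I, g ≠ 0 ∧ rnkElt δ e i g = m}

/-- `w` `u`-represents `g`: `w ∈ Σ*uΣ*`, `θ_i(w) = g`, and either `g = 0` or `rk(w)` is
minimum among all words with the first two properties. -/
def URepresents {Q A : Type*} [Fintype Q] [DecidableEq Q] (δ : Q → A → Q) {k : ℕ}
    {nn : Fin k → ℕ}
    (e : Ralg δ →ₐ[ℂ] ∀ i : Fin k, Matrix (Fin (nn i)) (Fin (nn i)) ℂ)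
    (u : List A) (i : Fin k) (w : List A) (g : Matrix (Fin (nn i)) (Fin (nn i)) ℂ) : Prop :=
  InFactor u w ∧ theta δ e w i = g ∧
    (g = 0 ∨ ∀ w' : List A, InFactor u w' → theta δ e w' i = g → wordRank δ w ≤ wordRank δ w')

/-- The relation `σ_i` on `ℐ_i`. -/
def sigmaRel {Q A : Type*} [Fintype Q] [DecidableEq Q] (δ : Q → A → Q) {k : ℕ}
    {nn : Fin k → ℕ}
    (e : Ralg δ →ₐ[ℂ] ∀ i : Fin k, Matrix (Fin (nn i)) (Fin (nn i)) ℂ)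
    (i : Fin k) (u : List A)
    (g f : Matrix (Fin (nn i)) (Fin (nn i)) ℂ) : Prop :=
  g = f ∨ ∃ w₁ w₂ : List A, URepresents δ e u i w₁ g ∧ URepresents δ e u i w₂ f ∧
    1 < (imageSet δ w₁ ∩ imageSet δ w₂).card

/-- `T ⊆ [1,k]` is a core. -/
def IsCore {Q A : Type*} [Fintype Q] [DecidableEq Q] (δ : Q → A → Q) {k : ℕ}
    {nn : Fin k → ℕ}
    (e : Ralg δ →ₐ[ℂ] ∀ i : Fin k, Matrix (Fin (nn i)) (Fin (nn i)) ℂ)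
    (T : Set (Fin k)) : Prop :=
  ∀ x : List A, (∀ i ∈ T, theta δ e x i = 0) → ∀ i : Fin k, theta δ e x i = 0

/-- A minimal core. -/
def IsMinimalCore {Q A : Type*} [Fintype Q] [DecidableEq Q] (δ : Q → A → Q) {k : ℕ}
    {nn : Fin k → ℕ}
    (e : Ralg δ →ₐ[ℂ] ∀ i : Fin k, Matrix (Fin (nn i)) (Fin (nn i)) ℂ)
    (T : Set (Fin k)) : Prop :=
  IsCore δ e T ∧ ∀ T' : Set (Fin k), T' ⊆ T → IsCore δ e T' → T' = T

/-- An automaton congruence. -/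
def IsCongruence {Q A : Type*} (δ : Q → A → Q) (σ : Q → Q → Prop) : Prop :=
  Equivalence σ ∧ ∀ q p : Q, σ q p → ∀ u : List A, σ (actW δ q u) (actW δ p u)

/-- A simple automaton: the only congruences are the identity and the universal relation. -/
def IsSimple {Q A : Type*} (δ : Q → A → Q) : Prop :=
  ∀ σ : Q → Q → Prop, IsCongruence δ σ → σ = Eq ∨ σ = fun _ _ => True


section Stmt6Aux

open Finset in
theorem actW_append {Q A : Type*} (δ : Q → A → Q) (q : Q) (x y : List A) :
    actW δ q (x ++ y) = actW δ (actW δ q x) y :=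
  List.foldl_append ..

theorem imageSet_append {Q A : Type*} [Fintype Q] [DecidableEq Q] (δ : Q → A → Q)
    (x y : List A) :
    imageSet δ (x ++ y) = (imageSet δ x).image (fun q => actW δ q y) := by
  ext p
  simp only [imageSet, Finset.mem_image, Finset.mem_univ, true_and, actW_append]
  constructor
  · rintro ⟨q, rfl⟩; exact ⟨actW δ q x, ⟨q, rfl⟩, rfl⟩
  · rintro ⟨q', ⟨q, rfl⟩, rfl⟩; exact ⟨q, rfl⟩

theorem imageSet_append_subset {Q A : Type*} [Fintype Q] [DecidableEq Q] (δ : Q → A → Q)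
    (x y : List A) : imageSet δ (x ++ y) ⊆ imageSet δ y := by
  intro p hp
  rw [imageSet_append] at hp
  rcases Finset.mem_image.mp hp with ⟨q, _, rfl⟩
  exact Finset.mem_image.mpr ⟨q, Finset.mem_univ q, rfl⟩

theorem wordRank_append_le_left {Q A : Type*} [Fintype Q] [DecidableEq Q] (δ : Q → A → Q)
    (x y : List A) : wordRank δ (x ++ y) ≤ wordRank δ x := by
  rw [wordRank, imageSet_append]
  exact Finset.card_image_le

theorem wordRank_le_middle {Q A : Type*} [Fintype Q] [DecidableEq Q] (δ : Q → A → Q)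
    (a w b : List A) : wordRank δ (a ++ w ++ b) ≤ wordRank δ w := by
  have h1 : a ++ w ++ b = a ++ (w ++ b) := by rw [List.append_assoc]
  rw [h1]
  calc wordRank δ (a ++ (w ++ b)) ≤ wordRank δ (w ++ b) :=
        Finset.card_le_card (imageSet_append_subset δ a (w ++ b))
    _ ≤ wordRank δ w := wordRank_append_le_left δ w b

theorem wordRank_pos {Q A : Type*} [Fintype Q] [DecidableEq Q] (δ : Q → A → Q)
    [Nonempty Q] (x : List A) : 1 ≤ wordRank δ x :=
  Finset.Nonempty.card_pos ⟨actW δ (Classical.arbitrary Q) x,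
    Finset.mem_image.mpr ⟨_, Finset.mem_univ _, rfl⟩⟩

theorem piLin_append {Q A : Type*} [Fintype Q] [DecidableEq Q] (δ : Q → A → Q)
    (x y : List A) : piLin δ (x ++ y) = (piLin δ y).comp (piLin δ x) := by
  apply LinearMap.ext; intro v; funext p
  show ∑ q ∈ Finset.univ.filter (fun q => actW δ q (x ++ y) = p), v q
      = ∑ q' ∈ Finset.univ.filter (fun q' => actW δ q' y = p),
          ∑ q ∈ Finset.univ.filter (fun q => actW δ q x = q'), v q
  rw [← Finset.sum_fiberwise_of_maps_to
      (s := Finset.univ.filter (fun q => actW δ q (x ++ y) = p))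
      (t := Finset.univ.filter (fun q' => actW δ q' y = p))
      (g := fun q => actW δ q x)
      (fun q hq => by
        simp only [Finset.mem_filter, Finset.mem_univ, true_and, actW_append] at hq ⊢
        exact hq) v]
  apply Finset.sum_congr rfl
  intro q' hq'
  simp only [Finset.mem_filter, Finset.mem_univ, true_and] at hq'
  apply Finset.sum_congr _ (fun _ _ => rfl)
  ext q
  simp only [Finset.mem_filter, Finset.mem_univ, true_and, actW_append]
  constructor
  · rintro ⟨-, h2⟩; exact h2
  · intro h; exact ⟨by rw [h]; exact hq', h⟩

theorem rhoEnd_append {Q A : Type*} [Fintype Q] [DecidableEq Q] (δ : Q → A → Q)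
    (x y : List A) : rhoEnd δ (x ++ y) = rhoEnd δ y * rhoEnd δ x := by
  apply LinearMap.ext; intro v
  apply Subtype.ext
  show piLin δ (x ++ y) (v : Q → ℂ) = _
  rw [piLin_append]
  rfl

theorem rho_append {Q A : Type*} [Fintype Q] [DecidableEq Q] (δ : Q → A → Q)
    (x y : List A) : rho δ (x ++ y) = rho δ x * rho δ y := by
  rw [rho, rhoEnd_append, MulOpposite.op_mul]
  rfl

theorem rhoEnd_nil {Q A : Type*} [Fintype Q] [DecidableEq Q] (δ : Q → A → Q) :
    rhoEnd δ ([] : List A) = 1 := by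
  apply LinearMap.ext; intro v
  apply Subtype.ext
  show piLin δ [] (v : Q → ℂ) = (v : Q → ℂ)
  funext p
  show ∑ q ∈ Finset.univ.filter (fun q => actW δ q [] = p), (v : Q → ℂ) q = (v : Q → ℂ) p
  have : Finset.univ.filter (fun q : Q => actW δ q [] = p) = {p} := by
    ext q; simp only [Finset.mem_filter, Finset.mem_univ, true_and, Finset.mem_singleton]
    simp [actW]
  rw [this, Finset.sum_singleton]

theorem rho_nil {Q A : Type*} [Fintype Q] [DecidableEq Q] (δ : Q → A → Q) :
    rho δ ([] : List A) = 1 := by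
  rw [rho, rhoEnd_nil]
  rfl

theorem rhoR_append {Q A : Type*} [Fintype Q] [DecidableEq Q] (δ : Q → A → Q)
    (x y : List A) : rhoR δ (x ++ y) = rhoR δ x * rhoR δ y := by
  apply Subtype.ext
  show rho δ (x ++ y) = (rhoR δ x : (Module.End ℂ (Wperp Q))ᵐᵒᵖ) * (rhoR δ y : _)
  rw [rho_append]
  rfl

theorem rhoR_nil {Q A : Type*} [Fintype Q] [DecidableEq Q] (δ : Q → A → Q) :
    rhoR δ ([] : List A) = 1 := by
  apply Subtype.ext
  show rho δ ([] : List A) = 1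
  rw [rho_nil]

theorem theta_append {Q A : Type*} [Fintype Q] [DecidableEq Q] (δ : Q → A → Q) {k : ℕ}
    {nn : Fin k → ℕ} (e : Ralg δ →ₐ[ℂ] ∀ i : Fin k, Matrix (Fin (nn i)) (Fin (nn i)) ℂ)
    (x y : List A) (i : Fin k) :
    theta δ e (x ++ y) i = theta δ e x i * theta δ e y i := by
  rw [theta, rhoR_append, map_mul]
  rfl

theorem theta_nil {Q A : Type*} [Fintype Q] [DecidableEq Q] (δ : Q → A → Q) {k : ℕ}
    {nn : Fin k → ℕ} (e : Ralg δ →ₐ[ℂ] ∀ i : Fin k, Matrix (Fin (nn i)) (Fin (nn i)) ℂ)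
    (i : Fin k) : theta δ e ([] : List A) i = 1 := by
  rw [theta, rhoR_nil, map_one]
  rfl

end Stmt6Aux
section Stmt6Aux2

theorem rhoR_congr {Q A : Type*} [Fintype Q] [DecidableEq Q] (δ : Q → A → Q)
    (x y : List A) (h : ∀ q, actW δ q x = actW δ q y) : rhoR δ x = rhoR δ y := by
  apply Subtype.ext
  show rho δ x = rho δ y
  have hpi : piLin δ x = piLin δ y := by
    apply LinearMap.ext; intro v; funext p
    show ∑ q ∈ Finset.univ.filter (fun q => actW δ q x = p), v q
        = ∑ q ∈ Finset.univ.filter (fun q => actW δ q y = p), v q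
    congr 1
    ext q
    simp [h q]
  have hend : rhoEnd δ x = rhoEnd δ y := by
    apply LinearMap.ext; intro v
    apply Subtype.ext
    show piLin δ x (v : Q → ℂ) = piLin δ y (v : Q → ℂ)
    rw [hpi]
  rw [rho, rho, hend]

theorem theta_congr {Q A : Type*} [Fintype Q] [DecidableEq Q] (δ : Q → A → Q) {k : ℕ}
    {nn : Fin k → ℕ} (e : Ralg δ →ₐ[ℂ] ∀ i : Fin k, Matrix (Fin (nn i)) (Fin (nn i)) ℂ)
    (x y : List A) (h : ∀ q, actW δ q x = actW δ q y) (i : Fin k) :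
    theta δ e x i = theta δ e y i := by
  rw [theta, theta, rhoR_congr δ x y h]

theorem rhoR_of_rank_one {Q A : Type*} [Fintype Q] [DecidableEq Q] (δ : Q → A → Q)
    (s : List A) (hs : wordRank δ s = 1) : rhoR δ s = 0 := by
  obtain ⟨pz, hpz⟩ := Finset.card_eq_one.mp hs
  have hall : ∀ q : Q, actW δ q s = pz := by
    intro q
    have : actW δ q s ∈ imageSet δ s := Finset.mem_image.mpr ⟨q, Finset.mem_univ q, rfl⟩
    rw [hpz, Finset.mem_singleton] at this
    exact this
  apply Subtype.ext
  show rho δ s = 0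
  have hend : rhoEnd δ s = 0 := by
    apply LinearMap.ext; intro v
    apply Subtype.ext
    show piLin δ s (v : Q → ℂ) = 0
    funext p
    show ∑ q ∈ Finset.univ.filter (fun q => actW δ q s = p), (v : Q → ℂ) q = 0
    by_cases hp : p = pz
    · subst hp
      have : Finset.univ.filter (fun q : Q => actW δ q s = p) = Finset.univ := by
        ext q; simp [hall q]
      rw [this]
      exact (mem_Wperp _).mp v.2
    · have : Finset.univ.filter (fun q : Q => actW δ q s = p) = ∅ := by
        ext q
        simp only [Finset.mem_filter, Finset.mem_univ, true_and, Finset.notMem_empty,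
          iff_false]
        rw [hall q]
        exact fun h => hp h.symm
      simp [this]
  rw [rho, hend]
  rfl

theorem theta_of_rank_one {Q A : Type*} [Fintype Q] [DecidableEq Q] (δ : Q → A → Q) {k : ℕ}
    {nn : Fin k → ℕ} (e : Ralg δ →ₐ[ℂ] ∀ i : Fin k, Matrix (Fin (nn i)) (Fin (nn i)) ℂ)
    (s : List A) (hs : wordRank δ s = 1) (i : Fin k) : theta δ e s i = 0 := by
  rw [theta, rhoR_of_rank_one δ s hs, map_zero]
  rfl

theorem finite_factorMonoid {Q A : Type*} [Fintype Q] [DecidableEq Q] (δ : Q → A → Q) {k : ℕ}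
    {nn : Fin k → ℕ} (e : Ralg δ →ₐ[ℂ] ∀ i : Fin k, Matrix (Fin (nn i)) (Fin (nn i)) ℂ)
    (i : Fin k) : (factorMonoid δ e i).Finite := by
  classical
  set F : (Q → Q) → Matrix (Fin (nn i)) (Fin (nn i)) ℂ := fun φ =>
    if h : ∃ x : List A, (fun q => actW δ q x) = φ then theta δ e h.choose i else 0 with hF
  have hsub : factorMonoid δ e i ⊆ F '' Set.univ := by
    rintro M ⟨x, rfl⟩
    refine ⟨fun q => actW δ q x, Set.mem_univ _, ?_⟩
    simp only [hF]
    have hex : ∃ z : List A, (fun q => actW δ q z) = (fun q => actW δ q x) := ⟨x, rfl⟩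
    rw [dif_pos hex]
    exact theta_congr δ e _ x (fun q => congrFun hex.choose_spec q) i
  exact Set.Finite.subset (Set.finite_univ.image F) hsub

end Stmt6Aux2
section Stmt6Aux3

theorem adjoin_induction_sub' {Q A : Type*} [Fintype Q] [DecidableEq Q] {δ : Q → A → Q}
    {p : Ralg δ → Prop}
    (mem : ∀ x (h : x ∈ Set.range (rho δ)), p ⟨x, Algebra.subset_adjoin h⟩)
    (algebraMap : ∀ r, p (algebraMap ℂ (Ralg δ) r))
    (add : ∀ x y : Ralg δ, p x → p y → p (x + y))
    (mul : ∀ x y : Ralg δ, p x → p y → p (x * y))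
    (x : Ralg δ) : p x := by
  obtain ⟨x, hx⟩ := x
  exact Algebra.adjoin_induction (p := fun y hy => p ⟨y, hy⟩) mem (fun r => algebraMap r)
    (fun _ _ _ _ h1 h2 => add _ _ h1 h2) (fun _ _ _ _ h1 h2 => mul _ _ h1 h2) hx

theorem mem_span_factorMonoid {Q A : Type*} [Fintype Q] [DecidableEq Q] (δ : Q → A → Q)
    {k : ℕ} {nn : Fin k → ℕ}
    (e : Ralg δ →ₐ[ℂ] ∀ i : Fin k, Matrix (Fin (nn i)) (Fin (nn i)) ℂ)
    (he_surj : Function.Surjective e) (i : Fin k)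
    (M : Matrix (Fin (nn i)) (Fin (nn i)) ℂ) :
    M ∈ Submodule.span ℂ (factorMonoid δ e i) := by
  classical
  have key : ∀ x : Ralg δ, e x i ∈ Submodule.span ℂ (factorMonoid δ e i) := by
    intro x
    refine adjoin_induction_sub'
      (p := fun x : Ralg δ => e x i ∈ Submodule.span ℂ (factorMonoid δ e i))
      ?_ ?_ ?_ ?_ x
    · rintro a ⟨w, rfl⟩
      have : (⟨rho δ w, Algebra.subset_adjoin (Set.mem_range_self w)⟩ : Ralg δ) = rhoR δ w :=
        rfl
      rw [this]
      exact Submodule.subset_span ⟨w, rfl⟩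
    · intro r
      have h1 : e (algebraMap ℂ (Ralg δ) r) = algebraMap ℂ _ r := e.commutes r
      show e ((algebraMap ℂ (Ralg δ)) r) i ∈ Submodule.span ℂ (factorMonoid δ e i)
      rw [h1]
      have h2 : (algebraMap ℂ (∀ j : Fin k, Matrix (Fin (nn j)) (Fin (nn j)) ℂ) r) i
          = r • (1 : Matrix (Fin (nn i)) (Fin (nn i)) ℂ) := by
        rw [Pi.algebraMap_apply, Algebra.algebraMap_eq_smul_one]
      rw [h2]
      refine Submodule.smul_mem _ r (Submodule.subset_span ⟨[], ?_⟩)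
      exact theta_nil δ e i
    · intro a b ha hb
      rw [map_add]
      exact Submodule.add_mem _ ha hb
    · intro a b ha hb
      rw [map_mul]
      have h3 : (e a * e b) i = e a i * e b i := rfl
      rw [h3]
      have h4 : e a i * e b i ∈ Submodule.span ℂ (factorMonoid δ e i)
          * Submodule.span ℂ (factorMonoid δ e i) := Submodule.mul_mem_mul ha hb
      rw [Submodule.span_mul_span] at h4
      refine Submodule.span_le.mpr ?_ h4
      rintro z ⟨z1, hz1, z2, hz2, rfl⟩
      obtain ⟨w1, rfl⟩ := hz1
      obtain ⟨w2, rfl⟩ := hz2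
      exact Submodule.subset_span ⟨w1 ++ w2, theta_append δ e w1 w2 i⟩
  obtain ⟨x, hx⟩ := he_surj (Pi.single i M)
  have := key x
  rw [hx, Pi.single_eq_same] at this
  exact this

theorem exists_sandwich_ne_zero {Q A : Type*} [Fintype Q] [DecidableEq Q] (δ : Q → A → Q)
    {k : ℕ} {nn : Fin k → ℕ}
    (e : Ralg δ →ₐ[ℂ] ∀ i : Fin k, Matrix (Fin (nn i)) (Fin (nn i)) ℂ)
    (he_surj : Function.Surjective e) (i : Fin k)
    (f : Matrix (Fin (nn i)) (Fin (nn i)) ℂ) (hf : f ≠ 0) :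
    ∃ t : List A, f * theta δ e t i * f ≠ 0 := by
  classical
  have hpq : ∃ p q, f p q ≠ 0 := by
    by_contra hc
    push_neg at hc
    exact hf (Matrix.ext fun p q => hc p q)
  obtain ⟨p, q, hpq⟩ := hpq
  by_contra hall
  push_neg at hall
  have hM0 : ∀ m ∈ factorMonoid δ e i, f * m * f = 0 := by
    rintro m ⟨t, rfl⟩
    exact hall t
  set L : Matrix (Fin (nn i)) (Fin (nn i)) ℂ →ₗ[ℂ] Matrix (Fin (nn i)) (Fin (nn i)) ℂ :=
    (LinearMap.mulRight ℂ f).comp (LinearMap.mulLeft ℂ f) with hL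
  have hker : Submodule.span ℂ (factorMonoid δ e i) ≤ LinearMap.ker L := by
    rw [Submodule.span_le]
    intro m hm
    rw [SetLike.mem_coe, LinearMap.mem_ker]
    show (f * m) * f = 0
    rw [mul_assoc]
    rw [← mul_assoc]
    exact hM0 m hm
  have hE := hker (mem_span_factorMonoid δ e he_surj i (Matrix.single q p 1))
  rw [LinearMap.mem_ker] at hE
  have hE' : f * Matrix.single q p 1 * f = 0 := by
    have : L (Matrix.single q p 1) = f * Matrix.single q p 1 * f := by
      show (f * Matrix.single q p 1) * f = _
      rfl
    rw [← this, hE]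
  have hentry : (f * Matrix.single q p 1 * f :
      Matrix (Fin (nn i)) (Fin (nn i)) ℂ) p q = f p q * f p q := by
    rw [Matrix.mul_apply]
    rw [Finset.sum_eq_single p]
    · rw [Matrix.mul_single_apply_same, mul_one]
    · intro b _ hb
      simp [hb]
    · intro h
      exact absurd (Finset.mem_univ p) h
  rw [hE'] at hentry
  exact mul_ne_zero hpq hpq (by simpa using hentry.symm)

end Stmt6Aux3
section Stmt6Aux4

theorem ideal_subset_of_zero_minimal {X : Type*} [Mul X] [Zero X]
    {M I0 : Set X} (hMfin : M.Finite)
    (hIuniq : ∀ J : Set X, IsZeroMinimalIdeal M J → J = I0) :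
    ∀ J : Set X, IsSetIdeal M J → (0 : X) ∈ J → J ≠ {0} → I0 ⊆ J := by
  classical
  have main : ∀ N : ℕ, ∀ J : Set X, J.ncard ≤ N → IsSetIdeal M J → (0 : X) ∈ J →
      J ≠ {0} → I0 ⊆ J := by
    intro N
    induction N with
    | zero =>
      intro J hcard hid h0 _
      exfalso
      have hJfin : J.Finite := hMfin.subset hid.1
      have : 0 < J.ncard := (Set.ncard_pos hJfin).mpr ⟨0, h0⟩
      omega
    | succ N ih =>
      intro J hcard hid h0 hne
      by_cases hmin : IsZeroMinimalIdeal M J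
      · exact (hIuniq J hmin).symm.subset.trans (le_refl _)
      · have hnotall : ¬ (∀ J' : Set X, IsSetIdeal M J' → (0 : X) ∈ J' → J' ⊆ J →
            J' ≠ {0} → J' = J) := fun hall => hmin ⟨hid, h0, hne, hall⟩
        push_neg at hnotall
        obtain ⟨J', hid', h0', hsub', hne', hJ'J⟩ := hnotall
        have hss : J' ⊂ J := HasSubset.Subset.ssubset_of_ne hsub' hJ'J
        have hJfin : J.Finite := hMfin.subset hid.1
        have hlt : J'.ncard < J.ncard := Set.ncard_lt_ncard hss hJfin
        exact (ih J' (by omega) hid' h0' hne').trans hsub'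
  exact fun J hid h0 hne => main J.ncard J le_rfl hid h0 hne

/-- The word-ideal generated by `w0`: if `θ w0 ≠ 0` then every element of the `0`-minimal
ideal is `θ` of a word of the form `a ++ w0 ++ b`. -/
theorem rep_with_factor {Q A : Type*} [Fintype Q] [DecidableEq Q] (δ : Q → A → Q)
    {k : ℕ} {nn : Fin k → ℕ}
    (e : Ralg δ →ₐ[ℂ] ∀ i : Fin k, Matrix (Fin (nn i)) (Fin (nn i)) ℂ)
    (i : Fin k) {I0 : Set (Matrix (Fin (nn i)) (Fin (nn i)) ℂ)}
    (hIuniq : ∀ J, IsZeroMinimalIdeal (factorMonoid δ e i) J → J = I0)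
    (s0 : List A) (hs0 : wordRank δ s0 = 1)
    (w0 : List A) (hw0 : theta δ e w0 i ≠ 0) :
    ∀ h' ∈ I0, ∃ a b : List A, h' = theta δ e (a ++ w0 ++ b) i := by
  classical
  set J : Set (Matrix (Fin (nn i)) (Fin (nn i)) ℂ) :=
    {x | ∃ a b : List A, x = theta δ e (a ++ w0 ++ b) i} with hJ
  have hid : IsSetIdeal (factorMonoid δ e i) J := by
    constructor
    · rintro x ⟨a, b, rfl⟩
      exact ⟨a ++ w0 ++ b, rfl⟩
    · rintro m ⟨c, rfl⟩ x ⟨a, b, rfl⟩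
      constructor
      · refine ⟨c ++ a, b, ?_⟩
        rw [← theta_append]
        congr 1
        simp [List.append_assoc]
      · refine ⟨a, b ++ c, ?_⟩
        rw [← theta_append]
        congr 1
        simp [List.append_assoc]
  have h0 : (0 : Matrix (Fin (nn i)) (Fin (nn i)) ℂ) ∈ J := by
    refine ⟨s0, [], ?_⟩
    have hr : wordRank δ (s0 ++ w0 ++ []) = 1 := by
      have h1 : wordRank δ (s0 ++ w0 ++ []) ≤ 1 := by
        calc wordRank δ (s0 ++ w0 ++ []) ≤ wordRank δ (s0 ++ w0) := by
              rw [List.append_nil]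
          _ ≤ wordRank δ s0 := wordRank_append_le_left δ s0 w0
          _ = 1 := hs0
      have h2 : 1 ≤ wordRank δ (s0 ++ w0 ++ []) := by
        have hne : (imageSet δ (s0 ++ w0 ++ [])).Nonempty := by
          have : (imageSet δ s0).Nonempty := by
            rw [← Finset.card_pos, ← wordRank, hs0]; norm_num
          obtain ⟨p, hp⟩ := this
          obtain ⟨qq, -, rfl⟩ := Finset.mem_image.mp hp
          exact ⟨actW δ qq (s0 ++ w0 ++ []),
            Finset.mem_image.mpr ⟨qq, Finset.mem_univ _, rfl⟩⟩
        exact Finset.Nonempty.card_pos hne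
      omega
    rw [theta_of_rank_one δ e _ hr i]
  have hne : J ≠ {0} := by
    intro hsingle
    have : theta δ e ([] ++ w0 ++ []) i ∈ J := ⟨[], [], rfl⟩
    rw [hsingle, Set.mem_singleton_iff] at this
    apply hw0
    rw [← this]
    congr 1
    simp
  intro h' hh'
  exact ideal_subset_of_zero_minimal (finite_factorMonoid δ e i) hIuniq J hid h0 hne hh'

end Stmt6Aux4
theorem stmt6 {Q A : Type*} [Fintype Q] [DecidableEq Q] (δ : Q → A → Q)
    {k : ℕ} {nn : Fin k → ℕ}
    (e : Ralg δ →ₐ[ℂ] ∀ i : Fin k, Matrix (Fin (nn i)) (Fin (nn i)) ℂ)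
    (he_surj : Function.Surjective e)
    (he_ker : ∀ x : Ralg δ, e x = 0 ↔ (x : (Module.End ℂ (Wperp Q))ᵐᵒᵖ) ∈ RadSet δ)
    (Ii : ∀ i : Fin k, Set (Matrix (Fin (nn i)) (Fin (nn i)) ℂ))
    (hIi : ∀ i : Fin k, IsZeroMinimalIdeal (factorMonoid δ e i) (Ii i))
    (hIuniq : ∀ (i : Fin k) (J : Set (Matrix (Fin (nn i)) (Fin (nn i)) ℂ)),
      IsZeroMinimalIdeal (factorMonoid δ e i) J → J = Ii i)
    (hn : 2 ≤ Fintype.card Q) (hsync : IsSynchronizing δ)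
    (v u : List A) (hu : IsVMinimal δ e v u) (i : Fin k) (hi : i ∈ suppW δ e u)
    (g : Matrix (Fin (nn i)) (Fin (nn i)) ℂ) (hg : g ∈ Ii i) :
    ∃ z : List A,
      z.length ≤ packingNumber 2 (rnkIdeal δ e i (Ii i)) (Fintype.card Q) ∧
      Relation.TransGen (sigmaRel δ e i u) (g * theta δ e z i) 0 := by
  classical
  obtain ⟨s0, hs0⟩ := hsync
  have hs0' : wordRank δ s0 = 1 := hs0
  have hθs0 : theta δ e s0 i = 0 := theta_of_rank_one δ e s0 hs0' i
  haveI hQ : Nonempty Q := Fintype.card_pos_iff.mp (by omega)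
  have habs : ∀ a ∈ factorMonoid δ e i, ∀ x ∈ Ii i, a * x ∈ Ii i ∧ x * a ∈ Ii i :=
    (hIi i).1.2
  have hIsub : Ii i ⊆ factorMonoid δ e i := (hIi i).1.1
  have hInz : ∃ h, h ∈ Ii i ∧ h ≠ 0 := by
    by_contra hc
    push_neg at hc
    exact (hIi i).2.2.1 (Set.eq_singleton_iff_unique_mem.mpr
      ⟨(hIi i).2.1, fun x hx => hc x hx⟩)
  by_cases hg0 : g = 0
  · refine ⟨[], Nat.zero_le _, Relation.TransGen.single (Or.inl ?_)⟩
    rw [hg0, zero_mul]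
  -- abbreviations
  have hrs_eq : rnkIdeal δ e i (Ii i)
      = sInf {m | ∃ g' ∈ Ii i, g' ≠ 0 ∧ rnkElt δ e i g' = m} := rfl
  -- the minimal rank `r` is a lower bound for ranks of words representing nonzero
  -- elements of the ideal
  have hrle : ∀ h, h ∈ Ii i → h ≠ 0 → ∀ w : List A, theta δ e w i = h →
      rnkIdeal δ e i (Ii i) ≤ wordRank δ w := by
    intro h hI hne w hw
    have h1 : rnkIdeal δ e i (Ii i) ≤ rnkElt δ e i h := by
      rw [hrs_eq]
      exact Nat.sInf_le ⟨h, hI, hne, rfl⟩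
    have h2 : rnkElt δ e i h ≤ wordRank δ w := Nat.sInf_le ⟨w, hw, rfl⟩
    omega
  -- an element h₀ achieving the minimal rank, with a witness word m₀
  obtain ⟨h₀, hh₀I, hh₀ne, hh₀r⟩ :
      ∃ h₀, h₀ ∈ Ii i ∧ h₀ ≠ 0 ∧ rnkElt δ e i h₀ = rnkIdeal δ e i (Ii i) := by
    obtain ⟨h1, hh1, hh1ne⟩ := hInz
    have hne : {m | ∃ g' ∈ Ii i, g' ≠ 0 ∧ rnkElt δ e i g' = m}.Nonempty :=
      ⟨rnkElt δ e i h1, h1, hh1, hh1ne, rfl⟩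
    obtain ⟨h₀, hmem1, hmem2, hmem3⟩ := Nat.sInf_mem hne
    exact ⟨h₀, hmem1, hmem2, hmem3⟩
  obtain ⟨m₀, hm₀θ, hm₀rk⟩ :
      ∃ m₀ : List A, theta δ e m₀ i = h₀ ∧ wordRank δ m₀ = rnkIdeal δ e i (Ii i) := by
    have hne : {m | ∃ w : List A, theta δ e w i = h₀ ∧ wordRank δ w = m}.Nonempty := by
      obtain ⟨w, hw⟩ := hIsub hh₀I
      exact ⟨wordRank δ w, w, hw, rfl⟩
    obtain ⟨w, hw1, hw2⟩ := Nat.sInf_mem hne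
    exact ⟨w, hw1, hw2.trans hh₀r⟩
  have hr2 : 2 ≤ rnkIdeal δ e i (Ii i) := by
    by_contra hlt
    push_neg at hlt
    have h1 : 1 ≤ wordRank δ m₀ := wordRank_pos δ m₀
    have h2 : wordRank δ m₀ = 1 := by omega
    exact hh₀ne (by rw [← hm₀θ, theta_of_rank_one δ e m₀ h2 i])
  have hrepw := rep_with_factor δ e i (hIuniq i) s0 hs0'
  -- a word W containing u with θ W ∈ Ii i nonzero and rank exactly r
  obtain ⟨t, ht⟩ := exists_sandwich_ne_zero δ e he_surj i h₀ hh₀ne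
  obtain ⟨a₁, b₁, hab1⟩ := hrepw u hi h₀ hh₀I
  obtain ⟨a₂, b₂, hab2⟩ := hrepw m₀ (by rw [hm₀θ]; exact hh₀ne) h₀ hh₀I
  set W := a₁ ++ u ++ b₁ ++ t ++ (a₂ ++ m₀ ++ b₂) with hWdef
  have hWθ : theta δ e W i = h₀ * theta δ e t i * h₀ := by
    rw [hWdef, theta_append, theta_append, ← hab1, ← hab2]
  have hWne : theta δ e W i ≠ 0 := by rw [hWθ]; exact ht
  have hWI : theta δ e W i ∈ Ii i := by
    rw [hWθ]
    have h1 : theta δ e t i * h₀ ∈ Ii i := (habs _ ⟨t, rfl⟩ h₀ hh₀I).1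
    have h2 := (habs h₀ (hIsub hh₀I) _ h1).1
    rwa [← mul_assoc] at h2
  have hWrk : wordRank δ W = rnkIdeal δ e i (Ii i) := by
    refine le_antisymm ?_ (hrle _ hWI hWne W rfl)
    have hWre : W = (a₁ ++ u ++ b₁ ++ t ++ a₂) ++ m₀ ++ b₂ := by
      simp [hWdef, List.append_assoc]
    rw [hWre]
    exact le_trans (wordRank_le_middle δ _ m₀ b₂) (le_of_eq hm₀rk)
  -- the word x : a rank-r representative of g containing u as a factor
  obtain ⟨c, d, hcd⟩ := hrepw W hWne g hg
  set x := c ++ W ++ d with hxdef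
  have hxθ : theta δ e x i = g := hcd.symm
  have hxrk : wordRank δ x = rnkIdeal δ e i (Ii i) :=
    le_antisymm (le_trans (wordRank_le_middle δ c W d) (le_of_eq hWrk))
      (hrle g hg hg0 x hxθ)
  have hxfac : InFactor u x := by
    refine ⟨c ++ a₁, b₁ ++ t ++ (a₂ ++ m₀ ++ b₂) ++ d, ?_⟩
    simp [hxdef, hWdef, List.append_assoc]
  -- the set of lengths of words driving g to (something ∼ 0)
  have hTs0 : Relation.TransGen (sigmaRel δ e i u) (g * theta δ e s0 i) 0 := by
    rw [hθs0, mul_zero]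
    exact Relation.TransGen.single (Or.inl rfl)
  have hNSne : {n : ℕ | ∃ y : List A,
      Relation.TransGen (sigmaRel δ e i u) (g * theta δ e y i) 0 ∧ y.length = n}.Nonempty :=
    ⟨s0.length, s0, hTs0, rfl⟩
  obtain ⟨ystar, hyT, hylen⟩ := Nat.sInf_mem hNSne
  refine ⟨ystar, ?_, hyT⟩
  by_contra hDm
  push_neg at hDm
  have hminT : ∀ y' : List A, y'.length < ystar.length →
      ¬ Relation.TransGen (sigmaRel δ e i u) (g * theta δ e y' i) 0 := by
    intro y' hlt hT
    have h1 : sInf {n : ℕ | ∃ y : List A,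
        Relation.TransGen (sigmaRel δ e i u) (g * theta δ e y i) 0 ∧ y.length = n}
        ≤ y'.length := Nat.sInf_le ⟨y', hT, rfl⟩
    omega
  -- all proper prefixes give nonzero elements of the ideal with rank exactly r
  have hpre : ∀ j, j < ystar.length →
      theta δ e (x ++ ystar.take j) i ∈ Ii i ∧
      g * theta δ e (ystar.take j) i ≠ 0 ∧
      wordRank δ (x ++ ystar.take j) = rnkIdeal δ e i (Ii i) := by
    intro j hj
    have hθj : theta δ e (x ++ ystar.take j) i = g * theta δ e (ystar.take j) i := by
      rw [theta_append, hxθ]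
    have hne : g * theta δ e (ystar.take j) i ≠ 0 := by
      intro h0
      apply hminT (ystar.take j) (by rw [List.length_take]; omega)
      rw [h0]
      exact Relation.TransGen.single (Or.inl rfl)
    have hI : theta δ e (x ++ ystar.take j) i ∈ Ii i := by
      rw [hθj]
      exact (habs _ ⟨ystar.take j, rfl⟩ g hg).2
    refine ⟨hI, hne, le_antisymm ?_ (hrle _ hI (by rw [hθj]; exact hne) _ rfl)⟩
    exact le_trans (wordRank_append_le_left δ x _) (le_of_eq hxrk)
  -- two prefixes whose images share at least two states
  have hexist : ∃ j l, j < l ∧ l < ystar.length ∧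
      1 < ((imageSet δ (x ++ ystar.take j)) ∩ (imageSet δ (x ++ ystar.take l))).card := by
    by_contra hpack
    push_neg at hpack
    set eqv : Q ≃ Fin (Fintype.card Q) := Fintype.equivFin Q with heqv
    have hcard_r : ∀ j, j < ystar.length →
        ((imageSet δ (x ++ ystar.take j)).image ⇑eqv).card = rnkIdeal δ e i (Ii i) := by
      intro j hj
      rw [Finset.card_image_of_injective _ eqv.injective]
      exact (hpre j hj).2.2
    have hinter : ∀ j l, j ≠ l → j < ystar.length → l < ystar.length →
        (((imageSet δ (x ++ ystar.take j)).image ⇑eqv) ∩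
          ((imageSet δ (x ++ ystar.take l)).image ⇑eqv)).card ≤ 1 := by
      intro j l hne hj hl
      rw [← Finset.image_inter _ _ eqv.injective,
        Finset.card_image_of_injective _ eqv.injective]
      rcases Nat.lt_or_ge j l with h | h
      · exact hpack j l h hl
      · have h2 := hpack l j (by omega) hj
        rwa [Finset.inter_comm] at h2
    have hinj : ∀ j l, j < ystar.length → l < ystar.length →
        ((imageSet δ (x ++ ystar.take j)).image ⇑eqv)
          = ((imageSet δ (x ++ ystar.take l)).image ⇑eqv) → j = l := by
      intro j l hj hl hEq
      by_contra hne
      have h1 := hinter j l hne hj hl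
      rw [hEq, Finset.inter_self] at h1
      have h2 := hcard_r l hl
      omega
    have hle : ystar.length ≤ packingNumber 2 (rnkIdeal δ e i (Ii i)) (Fintype.card Q) := by
      apply le_csSup
      · refine ⟨Fintype.card (Finset (Fin (Fintype.card Q))), ?_⟩
        rintro mm ⟨F', hF', -, -⟩
        rw [← hF']
        exact Finset.card_le_univ F'
      · refine ⟨(Finset.range ystar.length).image
          (fun j => (imageSet δ (x ++ ystar.take j)).image ⇑eqv), ?_, ?_, ?_⟩
        · rw [Finset.card_image_of_injOn, Finset.card_range]
          intro j hj l hl hEq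
          simp only [Finset.coe_range, Set.mem_Iio] at hj hl
          exact hinj j l hj hl hEq
        · intro S hS
          obtain ⟨j, hj, rfl⟩ := Finset.mem_image.mp hS
          exact hcard_r j (Finset.mem_range.mp hj)
        · intro T hT
          by_contra hc
          push_neg at hc
          obtain ⟨S₁, hS₁, S₂, hS₂, hS12⟩ := Finset.one_lt_card.mp hc
          rw [Finset.mem_filter] at hS₁ hS₂
          obtain ⟨j, hj, rfl⟩ := Finset.mem_image.mp hS₁.1
          obtain ⟨l, hl, rfl⟩ := Finset.mem_image.mp hS₂.1
          have hjl : j ≠ l := fun h => hS12 (by rw [h])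
          have hsub := Finset.card_le_card (Finset.subset_inter hS₁.2 hS₂.2)
          have h9 := hinter j l hjl (Finset.mem_range.mp hj) (Finset.mem_range.mp hl)
          omega
    omega
  obtain ⟨j, l, hjl, hlm, hcard2⟩ := hexist
  obtain ⟨p, hp, q, hq, hpq⟩ := Finset.one_lt_card.mp hcard2
  rw [Finset.mem_inter] at hp hq
  set s := ystar.drop l with hsdef
  set y' := ystar.take j ++ s with hy'def
  have hsplit : ystar = ystar.take l ++ s := (List.take_append_drop l ystar).symm
  have hxy' : x ++ y' = (x ++ ystar.take j) ++ s := by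
    rw [hy'def, ← List.append_assoc]
  have hxys : x ++ ystar = (x ++ ystar.take l) ++ s := by
    conv_lhs => rw [hsplit]
    rw [← List.append_assoc]
  have hy'len : y'.length < ystar.length := by
    rw [hy'def, List.length_append, List.length_take, List.length_drop]
    omega
  have hy'ne : g * theta δ e y' i ≠ 0 := by
    intro h0
    apply hminT y' hy'len
    rw [h0]
    exact Relation.TransGen.single (Or.inl rfl)
  have hθy' : theta δ e (x ++ y') i = g * theta δ e y' i := by
    rw [theta_append, hxθ]
  have hI' : theta δ e (x ++ y') i ∈ Ii i := by
    rw [hθy']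
    exact (habs _ ⟨y', rfl⟩ g hg).2
  have hIy' : g * theta δ e y' i ∈ Ii i := by rw [← hθy']; exact hI'
  obtain ⟨q0, hq0mem, hq0⟩ := Finset.mem_image.mp hp.1
  obtain ⟨q1, hq1mem, hq1⟩ := Finset.mem_image.mp hp.2
  obtain ⟨q2, hq2mem, hq2⟩ := Finset.mem_image.mp hq.1
  obtain ⟨q3, hq3mem, hq3⟩ := Finset.mem_image.mp hq.2
  have hps_mem_y' : actW δ p s ∈ imageSet δ (x ++ y') := by
    rw [hxy']
    exact Finset.mem_image.mpr ⟨q0, Finset.mem_univ _, by rw [actW_append, hq0]⟩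
  have hqs_mem_y' : actW δ q s ∈ imageSet δ (x ++ y') := by
    rw [hxy']
    exact Finset.mem_image.mpr ⟨q2, Finset.mem_univ _, by rw [actW_append, hq2]⟩
  have hps_mem_ys : actW δ p s ∈ imageSet δ (x ++ ystar) := by
    rw [hxys]
    exact Finset.mem_image.mpr ⟨q1, Finset.mem_univ _, by rw [actW_append, hq1]⟩
  have hqs_mem_ys : actW δ q s ∈ imageSet δ (x ++ ystar) := by
    rw [hxys]
    exact Finset.mem_image.mpr ⟨q3, Finset.mem_univ _, by rw [actW_append, hq3]⟩
  by_cases hps : actW δ p s = actW δ q s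
  · -- the pair collapses: the rank drops below r, so the element must be 0 — contradiction
    have hsub2 : imageSet δ (x ++ y') ⊆
        ((imageSet δ (x ++ ystar.take j)).erase q).image (fun t0 => actW δ t0 s) := by
      intro c0 hc0
      rw [hxy', imageSet_append] at hc0
      obtain ⟨t0, ht0, rfl⟩ := Finset.mem_image.mp hc0
      by_cases ht0q : t0 = q
      · subst ht0q
        exact Finset.mem_image.mpr ⟨p, Finset.mem_erase.mpr ⟨hpq, hp.1⟩, hps⟩
      · exact Finset.mem_image.mpr ⟨t0, Finset.mem_erase.mpr ⟨ht0q, ht0⟩, rfl⟩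
    have hwr1 : wordRank δ (x ++ y') = (imageSet δ (x ++ y')).card := rfl
    have hwr2 : (imageSet δ (x ++ ystar.take j)).card = rnkIdeal δ e i (Ii i) :=
      (hpre j (by omega)).2.2
    have h1 := Finset.card_le_card hsub2
    have h2 := Finset.card_image_le
      (s := (imageSet δ (x ++ ystar.take j)).erase q) (f := fun t0 => actW δ t0 s)
    have h3 : ((imageSet δ (x ++ ystar.take j)).erase q).card
        = (imageSet δ (x ++ ystar.take j)).card - 1 := Finset.card_erase_of_mem hq.1
    have h4 := hrle _ hIy' hy'ne (x ++ y') hθy'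
    omega
  · -- two distinct common states: a σ-step to `g·θ(ystar)`, which chains to 0
    have hrky' : wordRank δ (x ++ y') ≤ rnkIdeal δ e i (Ii i) := by
      rw [hxy']
      exact le_trans (wordRank_append_le_left δ _ s) (le_of_eq (hpre j (by omega)).2.2)
    have hstep : sigmaRel δ e i u (g * theta δ e y' i) (g * theta δ e ystar i) := by
      refine Or.inr ⟨x ++ y', x ++ ystar, ⟨?_, hθy', Or.inr ?_⟩,
        ⟨?_, by rw [theta_append, hxθ], ?_⟩, ?_⟩
      · obtain ⟨aa, bb, hab⟩ := hxfac
        exact ⟨aa, bb ++ y', by rw [hab]; simp [List.append_assoc]⟩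
      · intro w' hw'f hw'θ
        have h6 := hrle _ hIy' hy'ne w' hw'θ
        omega
      · obtain ⟨aa, bb, hab⟩ := hxfac
        exact ⟨aa, bb ++ ystar, by rw [hab]; simp [List.append_assoc]⟩
      · by_cases hys0 : g * theta δ e ystar i = 0
        · exact Or.inl hys0
        · refine Or.inr ?_
          intro w' hw'f hw'θ
          have h5 : g * theta δ e ystar i ∈ Ii i := (habs _ ⟨ystar, rfl⟩ g hg).2
          have h6 := hrle _ h5 hys0 w' hw'θ
          have h7 : wordRank δ (x ++ ystar) ≤ rnkIdeal δ e i (Ii i) :=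
            le_trans (wordRank_append_le_left δ x ystar) (le_of_eq hxrk)
          omega
      · refine Finset.one_lt_card.mpr ⟨actW δ p s, ?_, actW δ q s, ?_, hps⟩
        · exact Finset.mem_inter.mpr ⟨hps_mem_y', hps_mem_ys⟩
        · exact Finset.mem_inter.mpr ⟨hqs_mem_y', hqs_mem_ys⟩
    exact hminT y' hy'len (Relation.TransGen.head hstep hyT)

end
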